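/- Let γ : [a,b] → X be an injective Lipschitz curve into a metric space X. Then the 1-dimensional Hausdorff measure of the image equals the integral of the metric speed: H¹(γ([c,d])) = ∫_c^d |γ̇|(t) dt for every [c,d] ⊆ [a,b], where |γ̇|(t) = lim_{h→0} d(γ(t+h), γ(t))/|h| (which exists a.e.). -/

import Mathlib

open MeasureTheory Metric Filter

section AuxiliaryLemmas

open Set Topology
open scoped NNReal ENNReal

theorem sum_lintegral_Icc_le (w : ℝ → ℝ≥0∞) {u : ℕ → ℝ} (hu : Monotone u) (n : ℕ) :
    (∑ i ∈ Finset.range n, ∫⁻ x in Set.Icc (u i) (u (i + 1)), w x)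
      ≤ ∫⁻ x in Set.Icc (u 0) (u n), w x := by
  have hIcc_Ico : ∀ p q : ℝ, (∫⁻ x in Set.Icc p q, w x) = ∫⁻ x in Set.Ico p q, w x := by
    intro p q
    rw [Measure.restrict_congr_set (Ico_ae_eq_Icc (μ := volume) (a := p) (b := q))]
  simp only [hIcc_Ico]
  induction n with
  | zero => simp
  | succ n ih =>
    rw [Finset.sum_range_succ]
    have hsplit : (∫⁻ x in Set.Ico (u 0) (u n), w x) + ∫⁻ x in Set.Ico (u n) (u (n+1)), w x
        = ∫⁻ x in Set.Ico (u 0) (u (n+1)), w x := by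
      rw [← lintegral_union measurableSet_Ico (Set.Ico_disjoint_Ico_same),
        Set.Ico_union_Ico_eq_Ico (hu (Nat.zero_le n)) (hu (Nat.le_succ n))]
    calc (∑ i ∈ Finset.range n, ∫⁻ x in Set.Ico (u i) (u (i + 1)), w x)
          + ∫⁻ x in Set.Ico (u n) (u (n+1)), w x
        ≤ (∫⁻ x in Set.Ico (u 0) (u n), w x) + ∫⁻ x in Set.Ico (u n) (u (n+1)), w x :=
          add_le_add ih le_rfl
      _ = _ := hsplit


theorem clamp_lipschitz (a b : ℝ) : LipschitzWith 1 (fun u => max a (min u b)) := by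
  apply LipschitzWith.of_dist_le_mul
  intro u w
  simp only [NNReal.coe_one, one_mul, Real.dist_eq]
  calc |max a (min u b) - max a (min w b)|
      = |max (min u b) a - max (min w b) a| := by rw [max_comm a, max_comm a]
    _ ≤ max |min u b - min w b| |a - a| := abs_max_sub_max_le_max _ _ _ _
    _ = |min u b - min w b| := by rw [sub_self, abs_zero, max_eq_left (abs_nonneg _)]
    _ ≤ max |u - w| |b - b| := abs_min_sub_min_le_max _ _ _ _
    _ = |u - w| := by rw [sub_self, abs_zero, max_eq_left (abs_nonneg _)]

theorem seq_tendsto_nhdsWithin :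
    Tendsto (fun n : ℕ => 1 / ((n : ℝ) + 1)) atTop (𝓝[≠] (0:ℝ)) := by
  apply tendsto_nhdsWithin_of_tendsto_nhds_of_eventually_within
  · exact tendsto_one_div_add_atTop_nhds_zero_nat
  · filter_upwards with n
    simp only [Set.mem_compl_iff, Set.mem_singleton_iff]
    positivity


theorem avg_tendsto {f : ℝ → ℝ} {K : ℝ≥0} (hf : LipschitzWith K f) (t : ℝ)
    {h : ℕ → ℝ} (hpos : ∀ n, 0 < h n) (hlim : Tendsto h atTop (𝓝 0)) :
    Tendsto (fun n => (h n)⁻¹ * ∫ u in t..(t + h n), f u) atTop (𝓝 (f t)) := by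
  have hcont : Continuous f := hf.continuous
  rw [tendsto_iff_dist_tendsto_zero]
  apply squeeze_zero (fun n => dist_nonneg) (g := fun n => K * h n)
  · intro n
    have hint : ∀ s r : ℝ, IntervalIntegrable f volume s r :=
      fun s r => (hcont.intervalIntegrable s r)
    have hconst : ∫ u in t..(t + h n), (f t : ℝ) = (h n) * f t := by
      rw [intervalIntegral.integral_const]
      simp [smul_eq_mul, add_sub_cancel_left]
    have hsplit : ((h n)⁻¹ * ∫ u in t..(t + h n), f u) - f t
        = (h n)⁻¹ * ∫ u in t..(t + h n), (f u - f t) := by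
      rw [intervalIntegral.integral_sub (hint _ _) (by simp [intervalIntegrable_const]), hconst]
      have := (hpos n).ne'
      field_simp
    rw [Real.dist_eq, hsplit, abs_mul, abs_inv]
    have hb : ‖∫ u in t..(t + h n), (f u - f t)‖ ≤ (K * h n) * |t + h n - t| := by
      apply intervalIntegral.norm_integral_le_of_norm_le_const
      intro x hx
      rw [Set.uIoc_of_le (by linarith [hpos n])] at hx
      have := hf.dist_le_mul x t
      rw [Real.norm_eq_abs, ← Real.dist_eq]
      refine this.trans ?_
      rw [Real.dist_eq, abs_of_nonneg (by linarith [hx.1.le, hx.2])]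
      exact mul_le_mul_of_nonneg_left (by linarith [hx.1.le, hx.2]) K.coe_nonneg
    rw [abs_of_pos (hpos n)] at *
    calc (h n)⁻¹ * |∫ u in t..(t + h n), (f u - f t)|
        ≤ (h n)⁻¹ * ((K * h n) * (h n)) := by
          apply mul_le_mul_of_nonneg_left _ (inv_nonneg.2 (hpos n).le)
          rw [Real.norm_eq_abs] at hb
          simpa [add_sub_cancel_left, abs_of_pos (hpos n)] using hb
      _ = K * h n := by
          have hne := (hpos n).ne'
          field_simp
  · simpa using (tendsto_const_nhds (x := (K:ℝ))).mul hlim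

theorem shift_integral_identity {f : ℝ → ℝ} (hf : Continuous f) (s t h : ℝ) :
    ∫ u in s..t, (f (u + h) - f u) = (∫ u in t..(t + h), f u) - ∫ u in s..(s + h), f u := by
  have hint : ∀ p q : ℝ, IntervalIntegrable f volume p q := fun p q => hf.intervalIntegrable p q
  have hint' : ∀ p q : ℝ, IntervalIntegrable (fun u => f (u + h)) volume p q :=
    fun p q => (hf.comp (continuous_id.add continuous_const)).intervalIntegrable p q
  rw [intervalIntegral.integral_sub (hint' s t) (hint s t),
    intervalIntegral.integral_comp_add_right f h]
  have e1 : ∫ u in (s+h)..(t+h), f u = (∫ u in (s+h)..t, f u) + ∫ u in t..(t+h), f u :=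
    (intervalIntegral.integral_add_adjacent_intervals (hint _ _) (hint _ _)).symm
  have e2 : ∫ u in s..t, f u = (∫ u in s..(s+h), f u) + ∫ u in (s+h)..t, f u :=
    (intervalIntegral.integral_add_adjacent_intervals (hint _ _) (hint _ _)).symm
  rw [e1, e2]; ring

theorem diffquot_tendsto {f : ℝ → ℝ} {K : ℝ≥0} (hf : LipschitzWith K f) (s t : ℝ)
    {h : ℕ → ℝ} (hpos : ∀ n, 0 < h n) (hlim : Tendsto h atTop (𝓝 0)) :
    Tendsto (fun n => ∫ u in s..t, ((f (u + h n) - f u) / h n)) atTop (𝓝 (f t - f s)) := by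
  have key : ∀ n, ∫ u in s..t, ((f (u + h n) - f u) / h n)
      = (h n)⁻¹ * (∫ u in t..(t + h n), f u) - (h n)⁻¹ * ∫ u in s..(s + h n), f u := by
    intro n
    rw [intervalIntegral.integral_div, shift_integral_identity hf.continuous s t (h n)]
    field_simp
  simp only [key]
  exact ((avg_tendsto hf t hpos hlim).sub (avg_tendsto hf s hpos hlim))


section
variable {X : Type*} [MetricSpace X] [MeasurableSpace X] [BorelSpace X]
  {a b : ℝ} {γ : ℝ → X} {L : ℝ≥0}

theorem evar_Icc_le (hlip : LipschitzOnWith L γ (Set.Icc a b)) {s t : ℝ}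
    (hs : s ∈ Set.Icc a b) (ht : t ∈ Set.Icc a b) (hst : s ≤ t) :
    eVariationOn γ (Set.Icc s t) ≤ ENNReal.ofReal (L * (t - s)) := by
  have hmap : Set.MapsTo (id : ℝ → ℝ) (Set.Icc s t) (Set.Icc a b) :=
    fun x hx => Set.Icc_subset_Icc hs.1 ht.2 hx
  have h1 : eVariationOn (γ ∘ id) (Set.Icc s t) ≤ L * eVariationOn id (Set.Icc s t) :=
    hlip.comp_eVariationOn_le hmap
  have h2 : eVariationOn (id : ℝ → ℝ) (Set.Icc s t) ≤ ENNReal.ofReal (t - s) := by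
    have := (monotoneOn_id (s := Set.Icc s t)).eVariationOn_le
      (Set.left_mem_Icc.2 hst) (Set.right_mem_Icc.2 hst)
    simpa using this
  calc eVariationOn γ (Set.Icc s t) = eVariationOn (γ ∘ id) (Set.Icc s t) := rfl
    _ ≤ L * eVariationOn id (Set.Icc s t) := h1
    _ ≤ L * ENNReal.ofReal (t - s) := by exact mul_le_mul_right h2 _
    _ = ENNReal.ofReal (L * (t - s)) := by
        rw [ENNReal.ofReal_mul L.coe_nonneg, ENNReal.ofReal_coe_nnreal]

theorem evar_ne_top (hlip : LipschitzOnWith L γ (Set.Icc a b)) {s t : ℝ}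
    (hs : s ∈ Set.Icc a b) (ht : t ∈ Set.Icc a b) :
    eVariationOn γ (Set.Icc s t) ≠ ⊤ := by
  rcases le_total s t with h | h
  · exact ((evar_Icc_le hlip hs ht h).trans_lt ENNReal.ofReal_lt_top).ne
  · rcases lt_or_eq_of_le h with h' | h'
    · rw [Set.Icc_eq_empty (not_le.2 h'), eVariationOn.subsingleton]
      · simp
      · exact subsingleton_empty
    · subst h'
      rw [Set.Icc_self, eVariationOn.subsingleton _ (Set.subsingleton_singleton)]
      simp

/-- Cumulative variation function, clamped to `[a,b]`. -/
noncomputable def varAux (γ : ℝ → X) (a b : ℝ) : ℝ → ℝ :=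
  fun t => (eVariationOn γ (Set.Icc a (min t b))).toReal

theorem varAux_sub (hlip : LipschitzOnWith L γ (Set.Icc a b)) {s t : ℝ}
    (hs : s ∈ Set.Icc a b) (ht : t ∈ Set.Icc a b) (hst : s ≤ t) :
    eVariationOn γ (Set.Icc s t) = ENNReal.ofReal (varAux γ a b t - varAux γ a b s) := by
  have hmins : min s b = s := min_eq_left hs.2
  have hmint : min t b = t := min_eq_left ht.2
  have hadd := eVariationOn.Icc_add_Icc γ (s := (Set.univ : Set ℝ)) hs.1 hst (Set.mem_univ s)
  simp only [Set.univ_inter] at hadd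
  have h1 : eVariationOn γ (Set.Icc a s) ≠ ⊤ := evar_ne_top hlip (Set.left_mem_Icc.2 (le_trans hs.1 hs.2)) hs
  have h2 : eVariationOn γ (Set.Icc s t) ≠ ⊤ := evar_ne_top hlip hs ht
  have hV : varAux γ a b t = varAux γ a b s + (eVariationOn γ (Set.Icc s t)).toReal := by
    unfold varAux
    rw [hmins, hmint, ← hadd, ENNReal.toReal_add h1 h2]
  rw [hV]
  simp only [add_sub_cancel_left]
  rw [ENNReal.ofReal_toReal h2]

theorem varAux_ne_top (hlip : LipschitzOnWith L γ (Set.Icc a b)) (hab : a ≤ b) (t : ℝ) :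
    eVariationOn γ (Set.Icc a (min t b)) ≠ ⊤ := by
  have hsub : Set.Icc a (min t b) ⊆ Set.Icc a b := Set.Icc_subset_Icc_right (min_le_right t b)
  exact fun h => evar_ne_top hlip (Set.left_mem_Icc.2 hab) (Set.right_mem_Icc.2 hab)
    (top_le_iff.1 (h ▸ eVariationOn.mono γ hsub))

theorem varAux_mono (hlip : LipschitzOnWith L γ (Set.Icc a b)) (hab : a ≤ b) :
    Monotone (varAux γ a b) := by
  intro u w huw
  exact ENNReal.toReal_mono (varAux_ne_top hlip hab w)
    (eVariationOn.mono γ (Set.Icc_subset_Icc_right (min_le_min_right b huw)))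

theorem varAux_sub_real (hlip : LipschitzOnWith L γ (Set.Icc a b)) (hab : a ≤ b) {s t : ℝ}
    (hs : s ∈ Set.Icc a b) (ht : t ∈ Set.Icc a b) (hst : s ≤ t) :
    varAux γ a b t - varAux γ a b s = (eVariationOn γ (Set.Icc s t)).toReal := by
  rw [varAux_sub hlip hs ht hst, ENNReal.toReal_ofReal]
  have := varAux_mono hlip hab hst
  linarith


theorem varAux_clamp (hab : a ≤ b) (t : ℝ) :
    varAux γ a b t = varAux γ a b (max a (min t b)) := by
  rcases le_total a t with h | h
  · have h1 : a ≤ min t b := le_min h hab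
    rw [max_eq_right h1]
    unfold varAux
    rw [min_eq_left (min_le_right t b)]
  · have h1 : min t b = t := min_eq_left (le_trans h hab)
    have h2 : max a (min t b) = a := by rw [h1]; exact max_eq_left h
    rw [h2]
    unfold varAux
    rw [h1, min_eq_left hab]
    rcases lt_or_eq_of_le h with h' | h'
    · rw [Set.Icc_eq_empty (not_le.2 h'), Set.Icc_self,
        eVariationOn.subsingleton _ subsingleton_empty,
        eVariationOn.subsingleton _ Set.subsingleton_singleton]
    · rw [h']

theorem varAux_lipschitz (hlip : LipschitzOnWith L γ (Set.Icc a b)) (hab : a ≤ b) :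
    LipschitzWith L (varAux γ a b) := by
  apply LipschitzWith.of_dist_le_mul
  have key : ∀ u w : ℝ, u ≤ w → dist (varAux γ a b u) (varAux γ a b w) ≤ L * dist u w := by
    intro u w huw
    set cu := max a (min u b) with hcu
    set cw := max a (min w b) with hcw
    have hcu_mem : cu ∈ Set.Icc a b := ⟨le_max_left _ _, max_le hab (min_le_right _ _)⟩
    have hcw_mem : cw ∈ Set.Icc a b := ⟨le_max_left _ _, max_le hab (min_le_right _ _)⟩
    have hcc : cu ≤ cw := max_le_max le_rfl (min_le_min_right b huw)
    rw [varAux_clamp hab u, varAux_clamp hab w, ← hcu, ← hcw]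
    have hm : varAux γ a b cu ≤ varAux γ a b cw := varAux_mono hlip hab hcc
    rw [Real.dist_eq, abs_of_nonpos (by linarith), neg_sub]
    have := varAux_sub_real hlip hab hcu_mem hcw_mem hcc
    rw [this]
    have hle := evar_Icc_le hlip hcu_mem hcw_mem hcc
    have : (eVariationOn γ (Set.Icc cu cw)).toReal ≤ (L:ℝ) * (cw - cu) := by
      have h := ENNReal.toReal_mono ENNReal.ofReal_ne_top hle
      rwa [ENNReal.toReal_ofReal (mul_nonneg L.coe_nonneg (by linarith))] at h
    refine this.trans ?_
    have hdist : cw - cu ≤ dist u w := by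
      have h1 : |cw - cu| ≤ max |a - a| |min w b - min u b| := by
        rw [hcu, hcw]
        exact abs_max_sub_max_le_max a (min w b) a (min u b)
      have h2 : |min w b - min u b| ≤ max |w - u| |b - b| := abs_min_sub_min_le_max w b u b
      rw [Real.dist_eq]
      rw [sub_self, abs_zero, max_eq_right (abs_nonneg _)] at h1
      rw [sub_self, abs_zero, max_eq_left (abs_nonneg _)] at h2
      calc cw - cu ≤ |cw - cu| := le_abs_self _
        _ ≤ |w - u| := h1.trans h2
        _ = |u - w| := abs_sub_comm _ _
    exact mul_le_mul_of_nonneg_left hdist L.coe_nonneg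
  intro u w
  rcases le_total u w with h | h
  · exact key u w h
  · rw [dist_comm, dist_comm u w]; exact key w u h

theorem edist_le_lintegral (hlip : LipschitzOnWith L γ (Set.Icc a b)) (hab : a ≤ b)
    {v : ℝ → ℝ} (hvmeas : Measurable v)
    (hv : ∀ᵐ t ∂(volume.restrict (Set.Icc a b)),
      Tendsto (fun h : ℝ => dist (γ (t + h)) (γ t) / |h|) (𝓝[≠] 0) (𝓝 (v t)))
    {s t : ℝ} (hs : s ∈ Set.Icc a b) (ht : t ∈ Set.Icc a b) (hst : s ≤ t) :
    edist (γ s) (γ t) ≤ ∫⁻ u in Set.Icc s t, ENNReal.ofReal (v u) := by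
  set h : ℕ → ℝ := fun n => 1 / ((n : ℝ) + 1) with hh
  have hpos : ∀ n, 0 < h n := fun n => by positivity
  have hlim0 : Tendsto h atTop (𝓝 0) := tendsto_one_div_add_atTop_nhds_zero_nat
  have hlimW : Tendsto h atTop (𝓝[≠] (0:ℝ)) := seq_tendsto_nhdsWithin
  set p : ℝ → ℝ := fun u => max a (min u b) with hp
  have hpmem : ∀ u, p u ∈ Set.Icc a b := fun u =>
    ⟨le_max_left _ _, max_le hab (min_le_right _ _)⟩
  have hpeq : ∀ u ∈ Set.Icc a b, p u = u := fun u hu => by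
    simp only [hp]; rw [min_eq_left hu.2, max_eq_right hu.1]
  have hγp : LipschitzWith L (γ ∘ p) := by
    intro u w
    calc edist (γ (p u)) (γ (p w)) ≤ L * edist (p u) (p w) := hlip (hpmem u) (hpmem w)
      _ ≤ L * (1 * edist u w) := mul_le_mul_right (clamp_lipschitz a b u w) _
      _ = L * edist u w := by rw [one_mul]
  set f : ℝ → ℝ := fun u => dist (γ (p u)) (γ (p s)) with hf
  have hfK : LipschitzWith L f := by
    have := (LipschitzWith.dist_left (γ (p s))).comp hγp
    rwa [one_mul] at this
  -- the difference quotient integrals converge to f t - f s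
  set A : ℕ → ℝ := fun n => ∫ u in s..t, ((f (u + h n) - f u) / h n) with hA
  have hAlim : Tendsto A atTop (𝓝 (f t - f s)) := diffquot_tendsto hfK s t hpos hlim0
  set g : ℕ → ℝ → ℝ≥0∞ := fun n u => ENNReal.ofReal (|f (u + h n) - f u| / h n) with hg
  have hfcont : Continuous f := hfK.continuous
  have hgmeas : ∀ n, Measurable (g n) := by
    intro n
    apply ENNReal.measurable_ofReal.comp
    exact (((hfcont.comp (continuous_id.add continuous_const)).sub hfcont).abs.div_const _).measurable
  have hAle : ∀ n, ENNReal.ofReal (A n) ≤ ∫⁻ u in Set.Ioc s t, g n u := by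
    intro n
    have hint1 : IntegrableOn (fun u => (f (u + h n) - f u) / h n) (Set.Ioc s t) volume :=
      (((hfcont.comp (continuous_id.add continuous_const)).sub hfcont).div_const _).integrableOn_Ioc
    have hint2 : IntegrableOn (fun u => |f (u + h n) - f u| / h n) (Set.Ioc s t) volume :=
      ((((hfcont.comp (continuous_id.add continuous_const)).sub hfcont).abs).div_const _).integrableOn_Ioc
    have h1 : A n ≤ ∫ u in Set.Ioc s t, |f (u + h n) - f u| / h n := by
      have hAn : A n = ∫ u in Set.Ioc s t, (f (u + h n) - f u) / h n :=
        intervalIntegral.integral_of_le hst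
      rw [hAn]
      apply integral_mono hint1 hint2
      intro u
      exact (div_le_div_iff_of_pos_right (hpos n)).2 (le_abs_self _)
    calc ENNReal.ofReal (A n) ≤ ENNReal.ofReal (∫ u in Set.Ioc s t, |f (u + h n) - f u| / h n) :=
          ENNReal.ofReal_le_ofReal h1
      _ = ∫⁻ u in Set.Ioc s t, g n u := by
          rw [ofReal_integral_eq_lintegral_ofReal hint2]
          filter_upwards with u
          positivity
  have hbound : ∀ n, g n ≤ᵐ[volume.restrict (Set.Ioc s t)] fun _ => ENNReal.ofReal L := by
    intro n
    filter_upwards with u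
    apply ENNReal.ofReal_le_ofReal
    rw [div_le_iff₀ (hpos n)]
    have := hfK.dist_le_mul (u + h n) u
    rw [Real.dist_eq, Real.dist_eq, add_sub_cancel_left, abs_of_pos (hpos n)] at this
    exact this
  have hfin : ∫⁻ _ in Set.Ioc s t, (ENNReal.ofReal (L:ℝ)) ∂volume ≠ ⊤ := by
    rw [MeasureTheory.setLIntegral_const]
    exact ENNReal.mul_ne_top ENNReal.ofReal_ne_top (measure_Ioc_lt_top).ne
  have hlimsup_ae : ∀ᵐ u ∂(volume.restrict (Set.Ioc s t)),
      limsup (fun n => g n u) atTop ≤ ENNReal.ofReal (v u) := by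
    have hsub : Set.Ioc s t ⊆ Set.Icc a b :=
      (Set.Ioc_subset_Icc_self).trans (Set.Icc_subset_Icc hs.1 ht.2)
    have hv' := ae_restrict_of_ae_restrict_of_subset hsub hv
    have hmem : ∀ᵐ u ∂(volume.restrict (Set.Ioc s t)), u ∈ Set.Ioc s t :=
      ae_restrict_mem measurableSet_Ioc
    have hneb : ∀ᵐ u ∂(volume.restrict (Set.Ioc s t)), u ≠ b := by
      apply ae_restrict_of_ae
      rw [ae_iff]
      have : {u : ℝ | ¬u ≠ b} = {b} := by ext x; simp
      rw [this]
      exact Real.volume_singleton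
    filter_upwards [hv', hmem, hneb] with u hu humem huneb
    have hub : u < b := lt_of_le_of_ne (humem.2.trans ht.2) huneb
    have hua : a ≤ u := hs.1.trans humem.1.le
    have hev : ∀ᶠ n in atTop, g n u ≤ ENNReal.ofReal (dist (γ (u + h n)) (γ u) / |h n|) := by
      have : ∀ᶠ n in atTop, h n < b - u := hlim0.eventually (eventually_lt_nhds (by linarith))
      filter_upwards [this] with n hn
      apply ENNReal.ofReal_le_ofReal
      rw [abs_of_pos (hpos n)]
      refine (div_le_div_iff_of_pos_right (hpos n)).2 ?_
      have e1 : p (u + h n) = u + h n := hpeq _ ⟨by linarith [(hpos n).le], by linarith⟩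
      have e2 : p u = u := hpeq _ ⟨hua, hub.le⟩
      calc |f (u + h n) - f u|
          = |dist (γ (u + h n)) (γ (p s)) - dist (γ u) (γ (p s))| := by
            simp only [hf, e1, e2]
        _ ≤ dist (γ (u + h n)) (γ u) := abs_dist_sub_le _ _ _
    have htend : Tendsto (fun n => ENNReal.ofReal (dist (γ (u + h n)) (γ u) / |h n|)) atTop
        (𝓝 (ENNReal.ofReal (v u))) :=
      (ENNReal.tendsto_ofReal (hu.comp hlimW))
    calc limsup (fun n => g n u) atTop
        ≤ limsup (fun n => ENNReal.ofReal (dist (γ (u + h n)) (γ u) / |h n|)) atTop :=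
          limsup_le_limsup hev
      _ = ENNReal.ofReal (v u) := htend.limsup_eq
  -- put everything together
  have hmain : ENNReal.ofReal (f t - f s) ≤ ∫⁻ u in Set.Ioc s t, ENNReal.ofReal (v u) := by
    have h1 : Tendsto (fun n => ENNReal.ofReal (A n)) atTop (𝓝 (ENNReal.ofReal (f t - f s))) :=
      ENNReal.tendsto_ofReal hAlim
    calc ENNReal.ofReal (f t - f s) = limsup (fun n => ENNReal.ofReal (A n)) atTop :=
          h1.limsup_eq.symm
      _ ≤ limsup (fun n => ∫⁻ u in Set.Ioc s t, g n u) atTop :=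
          limsup_le_limsup (Eventually.of_forall hAle)
      _ ≤ ∫⁻ u in Set.Ioc s t, limsup (fun n => g n u) atTop :=
          limsup_lintegral_le _ hgmeas hbound hfin
      _ ≤ ∫⁻ u in Set.Ioc s t, ENNReal.ofReal (v u) := lintegral_mono_ae hlimsup_ae
  have hfts : f t - f s = dist (γ s) (γ t) := by
    rw [hf]
    simp only [hpeq s hs, hpeq t ht, dist_self, sub_zero, dist_comm]
  rw [edist_dist, ← hfts]
  refine hmain.trans (lintegral_mono' (Measure.restrict_mono Set.Ioc_subset_Icc_self le_rfl) le_rfl)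

theorem lintegral_le_var (hlip : LipschitzOnWith L γ (Set.Icc a b)) (hab : a ≤ b)
    {v : ℝ → ℝ} (hvmeas : Measurable v)
    (hv : ∀ᵐ t ∂(volume.restrict (Set.Icc a b)),
      Tendsto (fun h : ℝ => dist (γ (t + h)) (γ t) / |h|) (𝓝[≠] 0) (𝓝 (v t)))
    {s t : ℝ} (hs : s ∈ Set.Icc a b) (ht : t ∈ Set.Icc a b) (hst : s ≤ t) :
    (∫⁻ u in Set.Icc s t, ENNReal.ofReal (v u)) ≤
      ENNReal.ofReal (varAux γ a b t - varAux γ a b s) := by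
  set h : ℕ → ℝ := fun n => 1 / ((n : ℝ) + 1) with hh
  have hpos : ∀ n, 0 < h n := fun n => by positivity
  have hlim0 : Tendsto h atTop (𝓝 0) := tendsto_one_div_add_atTop_nhds_zero_nat
  have hlimW : Tendsto h atTop (𝓝[≠] (0:ℝ)) := seq_tendsto_nhdsWithin
  set V : ℝ → ℝ := varAux γ a b with hV
  have hVlip : LipschitzWith L V := varAux_lipschitz hlip hab
  have hVmono : Monotone V := varAux_mono hlip hab
  have hVcont : Continuous V := hVlip.continuous
  set g : ℕ → ℝ → ℝ≥0∞ := fun n u => ENNReal.ofReal ((V (u + h n) - V u) / h n) with hg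
  have hgmeas : ∀ n, Measurable (g n) := fun n =>
    ENNReal.measurable_ofReal.comp
      (((((hVcont.comp (continuous_id.add continuous_const)).sub hVcont).div_const _)).measurable)
  -- pointwise a.e. lower bound
  have hptwise : ∀ᵐ u ∂(volume.restrict (Set.Icc s t)),
      ENNReal.ofReal (v u) ≤ liminf (fun n => g n u) atTop := by
    have hsub : Set.Icc s t ⊆ Set.Icc a b := Set.Icc_subset_Icc hs.1 ht.2
    have hv' := ae_restrict_of_ae_restrict_of_subset hsub hv
    have hmem : ∀ᵐ u ∂(volume.restrict (Set.Icc s t)), u ∈ Set.Icc s t :=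
      ae_restrict_mem measurableSet_Icc
    have hneb : ∀ᵐ u ∂(volume.restrict (Set.Icc s t)), u ≠ b := by
      apply ae_restrict_of_ae
      rw [ae_iff]
      have : {u : ℝ | ¬u ≠ b} = {b} := by ext x; simp
      rw [this]
      exact Real.volume_singleton
    filter_upwards [hv', hmem, hneb] with u hu humem huneb
    have hub : u < b := lt_of_le_of_ne (humem.2.trans ht.2) huneb
    have hua : a ≤ u := hs.1.trans humem.1
    have hev : ∀ᶠ n in atTop,
        ENNReal.ofReal (dist (γ (u + h n)) (γ u) / |h n|) ≤ g n u := by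
      have : ∀ᶠ n in atTop, h n < b - u := hlim0.eventually (eventually_lt_nhds (by linarith))
      filter_upwards [this] with n hn
      apply ENNReal.ofReal_le_ofReal
      rw [abs_of_pos (hpos n)]
      refine (div_le_div_iff_of_pos_right (hpos n)).2 ?_
      have humem2 : u + h n ∈ Set.Icc a b := ⟨by linarith [(hpos n).le], by linarith⟩
      have humem1 : u ∈ Set.Icc a b := ⟨hua, hub.le⟩
      have hedist : edist (γ u) (γ (u + h n)) ≤ eVariationOn γ (Set.Icc u (u + h n)) :=
        eVariationOn.edist_le γ (Set.left_mem_Icc.2 (by linarith [(hpos n).le]))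
          (Set.right_mem_Icc.2 (by linarith [(hpos n).le]))
      rw [varAux_sub hlip humem1 humem2 (by linarith [(hpos n).le])] at hedist
      have := ENNReal.toReal_mono ENNReal.ofReal_ne_top hedist
      rw [edist_dist, ENNReal.toReal_ofReal dist_nonneg,
        ENNReal.toReal_ofReal] at this
      · rwa [dist_comm] at this
      · have := hVmono (le_add_of_nonneg_right (hpos n).le : u ≤ u + h n)
        linarith
    have htend : Tendsto (fun n => ENNReal.ofReal (dist (γ (u + h n)) (γ u) / |h n|)) atTop
        (𝓝 (ENNReal.ofReal (v u))) := ENNReal.tendsto_ofReal (hu.comp hlimW)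
    calc ENNReal.ofReal (v u)
        = liminf (fun n => ENNReal.ofReal (dist (γ (u + h n)) (γ u) / |h n|)) atTop :=
          htend.liminf_eq.symm
      _ ≤ liminf (fun n => g n u) atTop := liminf_le_liminf hev
  -- each ∫⁻ gₙ equals ofReal of a difference-quotient integral
  have hgint : ∀ n, (∫⁻ u in Set.Icc s t, g n u)
      = ENNReal.ofReal (∫ u in s..t, ((V (u + h n) - V u) / h n)) := by
    intro n
    have hint : IntegrableOn (fun u => (V (u + h n) - V u) / h n) (Set.Icc s t) volume :=
      (((hVcont.comp (continuous_id.add continuous_const)).sub hVcont).div_const _).integrableOn_Icc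
    rw [← ofReal_integral_eq_lintegral_ofReal hint ?_]
    · congr 1
      rw [intervalIntegral.integral_of_le hst, integral_Icc_eq_integral_Ioc]
    · filter_upwards with u
      have h1 := hVmono (le_add_of_nonneg_right (hpos n).le : u ≤ u + h n)
      exact div_nonneg (by linarith) (hpos n).le
  have htendI : Tendsto (fun n => ∫⁻ u in Set.Icc s t, g n u) atTop
      (𝓝 (ENNReal.ofReal (V t - V s))) := by
    simp only [hgint]
    exact ENNReal.tendsto_ofReal (diffquot_tendsto hVlip s t hpos hlim0)
  calc (∫⁻ u in Set.Icc s t, ENNReal.ofReal (v u))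
      ≤ ∫⁻ u in Set.Icc s t, liminf (fun n => g n u) atTop := lintegral_mono_ae hptwise
    _ ≤ liminf (fun n => ∫⁻ u in Set.Icc s t, g n u) atTop := lintegral_liminf_le hgmeas
    _ = ENNReal.ofReal (V t - V s) := htendI.liminf_eq

theorem evar_eq_lintegral (hlip : LipschitzOnWith L γ (Set.Icc a b)) (hab : a ≤ b)
    {v : ℝ → ℝ} (hvmeas : Measurable v)
    (hv : ∀ᵐ t ∂(volume.restrict (Set.Icc a b)),
      Tendsto (fun h : ℝ => dist (γ (t + h)) (γ t) / |h|) (𝓝[≠] 0) (𝓝 (v t)))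
    {s t : ℝ} (hs : s ∈ Set.Icc a b) (ht : t ∈ Set.Icc a b) (hst : s ≤ t) :
    eVariationOn γ (Set.Icc s t) = ∫⁻ u in Set.Icc s t, ENNReal.ofReal (v u) := by
  apply le_antisymm
  · apply iSup_le
    rintro ⟨n, u, hu, us⟩
    have humem : ∀ i, u i ∈ Set.Icc a b := fun i => Set.Icc_subset_Icc hs.1 ht.2 (us i)
    calc (∑ i ∈ Finset.range n, edist (γ (u (i+1))) (γ (u i)))
        ≤ ∑ i ∈ Finset.range n, ∫⁻ x in Set.Icc (u i) (u (i+1)), ENNReal.ofReal (v x) := by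
          apply Finset.sum_le_sum
          intro i _
          rw [edist_comm]
          exact edist_le_lintegral hlip hab hvmeas hv (humem i) (humem (i+1))
            (hu (Nat.le_succ i))
      _ ≤ ∫⁻ x in Set.Icc (u 0) (u n), ENNReal.ofReal (v x) :=
          sum_lintegral_Icc_le _ hu n
      _ ≤ ∫⁻ x in Set.Icc s t, ENNReal.ofReal (v x) :=
          lintegral_mono' (Measure.restrict_mono (Set.Icc_subset_Icc (us 0).1 (us n).2) le_rfl)
            le_rfl
  · rw [varAux_sub hlip hs ht hst]
    exact lintegral_le_var hlip hab hvmeas hv hs ht hst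


theorem edist_le_hausdorff (hlip : LipschitzOnWith L γ (Set.Icc a b)) {s t : ℝ}
    (hs : s ∈ Set.Icc a b) (ht : t ∈ Set.Icc a b) (hst : s ≤ t) :
    edist (γ s) (γ t) ≤ μH[1] (γ '' Set.Icc s t) := by
  have hcont : ContinuousOn γ (Set.Icc s t) :=
    hlip.continuousOn.mono (Set.Icc_subset_Icc hs.1 ht.2)
  set ψ : ℝ → ℝ := fun u => dist (γ u) (γ s) with hψ
  have hψcont : ContinuousOn ψ (Set.Icc s t) :=
    (LipschitzWith.dist_left (γ s)).continuous.comp_continuousOn hcont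
  have hIVT : Set.Icc (ψ s) (ψ t) ⊆ ψ '' Set.Icc s t := intermediate_value_Icc hst hψcont
  have hψs : ψ s = 0 := dist_self _
  calc edist (γ s) (γ t) = ENNReal.ofReal (dist (γ t) (γ s)) := by rw [edist_dist, dist_comm]
    _ = volume (Set.Icc (0:ℝ) (dist (γ t) (γ s))) := by rw [Real.volume_Icc, sub_zero]
    _ = μH[1] (Set.Icc (0:ℝ) (dist (γ t) (γ s))) := by rw [hausdorffMeasure_real]
    _ ≤ μH[1] (ψ '' Set.Icc s t) := by
        apply measure_mono
        rw [← hψs]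
        exact hIVT
    _ = μH[1] ((fun x => dist x (γ s)) '' (γ '' Set.Icc s t)) := by
        rw [Set.image_image]
    _ ≤ (1:ℝ≥0) ^ (1:ℝ) * μH[1] (γ '' Set.Icc s t) :=
        (LipschitzWith.dist_left (γ s)).hausdorffMeasure_image_le zero_le_one _
    _ = μH[1] (γ '' Set.Icc s t) := by simp

theorem hausdorff_le_evar (hlip : LipschitzOnWith L γ (Set.Icc a b)) (hab : a ≤ b) {s t : ℝ}
    (hs : s ∈ Set.Icc a b) (ht : t ∈ Set.Icc a b) (hst : s ≤ t) :
    μH[1] (γ '' Set.Icc s t) ≤ eVariationOn γ (Set.Icc s t) := by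
  set V : ℝ → ℝ := varAux γ a b with hV
  have hVmono : Monotone V := varAux_mono hlip hab
  set T := Set.Icc s t with hT
  set g : ℝ → X := fun u => γ (Function.invFunOn V T u) with hg
  have hkey : ∀ w₁ ∈ T, ∀ w₂ ∈ T, w₁ ≤ w₂ →
      edist (γ w₁) (γ w₂) ≤ ENNReal.ofReal (V w₂ - V w₁) := by
    intro w₁ h₁ w₂ h₂ h12
    have hmem1 : w₁ ∈ Set.Icc a b := Set.Icc_subset_Icc hs.1 ht.2 h₁
    have hmem2 : w₂ ∈ Set.Icc a b := Set.Icc_subset_Icc hs.1 ht.2 h₂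
    have := eVariationOn.edist_le γ (Set.left_mem_Icc.2 h12) (Set.right_mem_Icc.2 h12)
    rwa [varAux_sub hlip hmem1 hmem2 h12] at this
  have hg_lip : LipschitzOnWith 1 g (V '' T) := by
    intro u₁ h₁ u₂ h₂
    obtain ⟨x₁, hx₁, he₁⟩ := h₁
    obtain ⟨x₂, hx₂, he₂⟩ := h₂
    set w₁ := Function.invFunOn V T u₁ with hw₁
    set w₂ := Function.invFunOn V T u₂ with hw₂
    have hw₁T : w₁ ∈ T := Function.invFunOn_mem ⟨x₁, hx₁, he₁⟩
    have hw₂T : w₂ ∈ T := Function.invFunOn_mem ⟨x₂, hx₂, he₂⟩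
    have hVw₁ : V w₁ = u₁ := Function.invFunOn_eq ⟨x₁, hx₁, he₁⟩
    have hVw₂ : V w₂ = u₂ := Function.invFunOn_eq ⟨x₂, hx₂, he₂⟩
    have : edist (γ w₁) (γ w₂) ≤ edist u₁ u₂ := by
      rcases le_total w₁ w₂ with h12 | h21
      · calc edist (γ w₁) (γ w₂) ≤ ENNReal.ofReal (V w₂ - V w₁) := hkey _ hw₁T _ hw₂T h12
          _ = edist u₁ u₂ := by
            rw [edist_dist, Real.dist_eq, ← hVw₁, ← hVw₂,
              abs_of_nonpos (by linarith [hVmono h12]), neg_sub]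
      · calc edist (γ w₁) (γ w₂) = edist (γ w₂) (γ w₁) := edist_comm _ _
          _ ≤ ENNReal.ofReal (V w₁ - V w₂) := hkey _ hw₂T _ hw₁T h21
          _ = edist u₁ u₂ := by
            rw [edist_dist, Real.dist_eq, ← hVw₁, ← hVw₂,
              abs_of_nonneg (by linarith [hVmono h21])]
    calc edist (g u₁) (g u₂) = edist (γ w₁) (γ w₂) := rfl
      _ ≤ edist u₁ u₂ := this
      _ = (1:ℝ≥0) * edist u₁ u₂ := by rw [ENNReal.coe_one, one_mul]
  have himg : γ '' T ⊆ g '' (V '' T) := by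
    rintro x ⟨r, hr, rfl⟩
    refine ⟨V r, Set.mem_image_of_mem _ hr, ?_⟩
    set w := Function.invFunOn V T (V r) with hw
    have hwT : w ∈ T := Function.invFunOn_mem ⟨r, hr, rfl⟩
    have hVw : V w = V r := Function.invFunOn_eq ⟨r, hr, rfl⟩
    have : edist (γ w) (γ r) = 0 := by
      rcases le_total w r with h12 | h21
      · have := hkey _ hwT _ hr h12
        rw [← hVw] at this
        simpa using this
      · have := hkey _ hr _ hwT h21
        rw [← hVw] at this
        simp only [sub_self, ENNReal.ofReal_zero, nonpos_iff_eq_zero] at this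
        rw [edist_comm]
        exact this
    have := edist_eq_zero.1 this
    exact this
  calc μH[1] (γ '' T) ≤ μH[1] (g '' (V '' T)) := measure_mono himg
    _ ≤ (1:ℝ≥0) ^ (1:ℝ) * μH[1] (V '' T) := hg_lip.hausdorffMeasure_image_le zero_le_one
    _ = μH[1] (V '' T) := by simp
    _ ≤ μH[1] (Set.Icc (V s) (V t)) := by
        apply measure_mono
        rintro x ⟨r, hr, rfl⟩
        exact ⟨hVmono hr.1, hVmono hr.2⟩
    _ = volume (Set.Icc (V s) (V t)) := by rw [hausdorffMeasure_real]
    _ = ENNReal.ofReal (V t - V s) := Real.volume_Icc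
    _ = eVariationOn γ (Set.Icc s t) := (varAux_sub hlip hs ht hst).symm

theorem evar_le_hausdorff (hlip : LipschitzOnWith L γ (Set.Icc a b))
    (hinj : Set.InjOn γ (Set.Icc a b)) {s t : ℝ}
    (hs : s ∈ Set.Icc a b) (ht : t ∈ Set.Icc a b) (hst : s ≤ t) :
    eVariationOn γ (Set.Icc s t) ≤ μH[1] (γ '' Set.Icc s t) := by
  haveI : NullSingletonClass (μH[1] : Measure X) := Measure.noAtoms_hausdorff X one_pos
  apply iSup_le
  rintro ⟨n, u, hu, us⟩
  have humem : ∀ i, u i ∈ Set.Icc a b := fun i => Set.Icc_subset_Icc hs.1 ht.2 (us i)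
  have hmble : ∀ i : ℕ, NullMeasurableSet (γ '' Set.Icc (u i) (u (i+1))) (μH[1]) := by
    intro i
    refine (IsCompact.measurableSet ?_).nullMeasurableSet
    exact (isCompact_Icc).image_of_continuousOn
      (hlip.continuousOn.mono (Set.Icc_subset_Icc (humem i).1 (humem (i+1)).2))
  have hdisj : ((Finset.range n : Finset ℕ) : Set ℕ).Pairwise
      (Function.onFun (AEDisjoint (μH[1])) fun i => γ '' Set.Icc (u i) (u (i+1))) := by
    have key : ∀ i j : ℕ, i < j →
        (μH[1]) ((γ '' Set.Icc (u i) (u (i+1))) ∩ (γ '' Set.Icc (u j) (u (j+1)))) = 0 := by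
      intro i j hij
      have hsub1 : Set.Icc (u i) (u (i+1)) ⊆ Set.Icc a b :=
        Set.Icc_subset_Icc (humem i).1 (humem (i+1)).2
      have hsub2 : Set.Icc (u j) (u (j+1)) ⊆ Set.Icc a b :=
        Set.Icc_subset_Icc (humem j).1 (humem (j+1)).2
      rw [← hinj.image_inter hsub1 hsub2]
      have hss : (Set.Icc (u i) (u (i+1)) ∩ Set.Icc (u j) (u (j+1))).Subsingleton := by
        intro x hx y hy
        have h1 : u (i+1) ≤ u j := hu hij
        have hx1 : x = u j := le_antisymm (hx.1.2.trans h1) hx.2.1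
        have hy1 : y = u j := le_antisymm (hy.1.2.trans h1) hy.2.1
        rw [hx1, hy1]
      exact (hss.image γ).measure_zero _
    intro i hi j hj hij
    rcases lt_or_gt_of_ne hij with h | h
    · exact key i j h
    · rw [Function.onFun, AEDisjoint, Set.inter_comm]
      exact key j i h
  calc (∑ i ∈ Finset.range n, edist (γ (u (i+1))) (γ (u i)))
      ≤ ∑ i ∈ Finset.range n, μH[1] (γ '' Set.Icc (u i) (u (i+1))) := by
        apply Finset.sum_le_sum
        intro i _
        rw [edist_comm]
        exact edist_le_hausdorff hlip (humem i) (humem (i+1)) (hu (Nat.le_succ i))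
    _ = μH[1] (⋃ i ∈ Finset.range n, γ '' Set.Icc (u i) (u (i+1))) :=
        (measure_biUnion_finset₀ hdisj (fun i _ => hmble i)).symm
    _ ≤ μH[1] (γ '' Set.Icc s t) := by
        apply measure_mono
        apply Set.iUnion₂_subset
        intro i _
        exact Set.image_mono (Set.Icc_subset_Icc (us i).1 (us (i+1)).2)

end

end AuxiliaryLemmas

/-- For an injective Lipschitz curve `γ : [a,b] → X` into a metric space, the
1-dimensional Hausdorff measure of `γ([c,d])` equals the integral of the metric
speed `|γ̇|(t) = lim_{h→0} d(γ(t+h),γ(t))/|h|` (which exists a.e.). -/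
theorem stmt13 {X : Type*} [MetricSpace X] [MeasurableSpace X] [BorelSpace X]
    (a b : ℝ) (hab : a ≤ b) (γ : ℝ → X) (L : NNReal)
    (hlip : LipschitzOnWith L γ (Set.Icc a b))
    (hinj : Set.InjOn γ (Set.Icc a b))
    (v : ℝ → ℝ) (hvmeas : Measurable v) (hv0 : ∀ t, 0 ≤ v t)
    (hv : ∀ᵐ t ∂(volume.restrict (Set.Icc a b)),
      Tendsto (fun h : ℝ => dist (γ (t + h)) (γ t) / |h|) (nhdsWithin 0 {0}ᶜ) (nhds (v t)))
    (c d : ℝ) (hc : a ≤ c) (hcd : c ≤ d) (hd : d ≤ b) :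
    μH[1] (γ '' Set.Icc c d) = ∫⁻ t in Set.Icc c d, ENNReal.ofReal (v t) := by
  have hcmem : c ∈ Set.Icc a b := ⟨hc, hcd.trans hd⟩
  have hdmem : d ∈ Set.Icc a b := ⟨hc.trans hcd, hd⟩
  rw [← evar_eq_lintegral hlip hab hvmeas hv hcmem hdmem hcd]
  exact le_antisymm (hausdorff_le_evar hlip hab hcmem hdmem hcd)
    (evar_le_hausdorff hlip hinj hcmem hdmem hcd)
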